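/- Let $d \ge 1$ and $p \in [1,2]$. Then for all $x, y \in \mathbb{R}^d$ one has $\big| |x|^{p-2}x - |y|^{p-2}y \big| \le 2^{2-p}(3-p)\,|x-y|^{p-1}$, where $|\cdot|$ denotes the Euclidean norm. -/

import Mathlib

open Real

private lemma sub_rpow_le {u v q : ℝ} (hv : 0 ≤ v) (hvu : v ≤ u) (hq0 : 0 ≤ q) (hq1 : q ≤ 1) :
    u ^ q - v ^ q ≤ (u - v) ^ q := by
  have h := NNReal.rpow_add_le_add_rpow ((u - v).toNNReal) (v.toNNReal) hq0 hq1
  have hadd : (u - v).toNNReal + v.toNNReal = u.toNNReal := by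
    rw [← Real.toNNReal_add (by linarith) hv]
    norm_num
  rw [hadd] at h
  have h' := NNReal.coe_le_coe.2 h
  push_cast [NNReal.coe_rpow, Real.coe_toNNReal _ (by linarith : (0:ℝ) ≤ u),
    Real.coe_toNNReal _ (by linarith : (0:ℝ) ≤ u - v), Real.coe_toNNReal _ hv] at h'
  linarith

private lemma sq_rpow (x q : ℝ) (hx : 0 ≤ x) : (x ^ 2) ^ q = (x ^ q) ^ 2 := by
  rw [← Real.rpow_natCast x 2, ← Real.rpow_natCast (x ^ q) 2, ← Real.rpow_mul hx,
    ← Real.rpow_mul hx]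
  norm_num [mul_comm]

theorem stmt_1 (d : ℕ) (hd : 1 ≤ d) (p : ℝ) (hp1 : 1 ≤ p) (hp2 : p ≤ 2)
    (x y : EuclideanSpace ℝ (Fin d)) :
    ‖(‖x‖ ^ (p - 2)) • x - (‖y‖ ^ (p - 2)) • y‖ ≤
      (2 : ℝ) ^ (2 - p) * (3 - p) * ‖x - y‖ ^ (p - 1) := by
  have hq0 : (0:ℝ) ≤ p - 1 := by linarith
  have hq1 : p - 1 ≤ 1 := by linarith
  have hKP : (1:ℝ) ≤ 2 ^ (2 - p) := by
    have := Real.rpow_le_rpow_of_exponent_le (by norm_num : (1:ℝ) ≤ 2)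
      (show (0:ℝ) ≤ 2 - p by linarith)
    simpa using this
  have hK1 : (1:ℝ) ≤ 2 ^ (2 - p) * (3 - p) := by nlinarith
  by_cases hx : x = 0
  · subst hx
    simp only [norm_zero, smul_zero, zero_sub, norm_neg, norm_smul, Real.norm_eq_abs,
      abs_of_nonneg (Real.rpow_nonneg (norm_nonneg y) _)]
    by_cases hy : y = 0
    · subst hy
      simp only [norm_zero, mul_zero]
      positivity
    · have hb : 0 < ‖y‖ := norm_pos_iff.2 hy
      have : ‖y‖ ^ (p - 2) * ‖y‖ = ‖y‖ ^ (p - 1) := by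
        rw [show p - 1 = (p - 2) + 1 by ring, Real.rpow_add_one hb.ne']
      rw [this]
      exact le_mul_of_one_le_left (Real.rpow_nonneg hb.le _) hK1
  by_cases hy : y = 0
  · subst hy
    simp only [norm_zero, smul_zero, sub_zero, norm_smul, Real.norm_eq_abs,
      abs_of_nonneg (Real.rpow_nonneg (norm_nonneg x) _)]
    have hb : 0 < ‖x‖ := norm_pos_iff.2 hx
    have : ‖x‖ ^ (p - 2) * ‖x‖ = ‖x‖ ^ (p - 1) := by
      rw [show p - 1 = (p - 2) + 1 by ring, Real.rpow_add_one hb.ne']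
    rw [this]
    exact le_mul_of_one_le_left (Real.rpow_nonneg hb.le _) hK1
  -- main case
  have ha : 0 < ‖x‖ := norm_pos_iff.2 hx
  have hb : 0 < ‖y‖ := norm_pos_iff.2 hy
  set a := ‖x‖ with ha_def
  set b := ‖y‖ with hb_def
  set c := (inner ℝ x y : ℝ) with hc_def
  set α := a ^ (p - 2) with hα_def
  set β := b ^ (p - 2) with hβ_def
  set A := a ^ (p - 1) with hA_def
  set B := b ^ (p - 1) with hB_def
  have hαa : α * a = A := by
    rw [hα_def, hA_def, show p - 1 = (p - 2) + 1 by ring, Real.rpow_add_one ha.ne']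
  have hβb : β * b = B := by
    rw [hβ_def, hB_def, show p - 1 = (p - 2) + 1 by ring, Real.rpow_add_one hb.ne']
  have hA0 : 0 ≤ A := Real.rpow_nonneg ha.le _
  have hB0 : 0 ≤ B := Real.rpow_nonneg hb.le _
  set t := ‖x - y‖ with ht_def
  clear_value a b c α β A B t
  have ht0 : 0 ≤ t := by rw [ht_def]; exact norm_nonneg _
  have ht2 : t ^ 2 = a ^ 2 - 2 * c + b ^ 2 := by
    rw [ht_def, ha_def, hb_def, hc_def]; exact norm_sub_sq_real x y
  have hα0 : 0 ≤ α := by rw [hα_def]; exact Real.rpow_nonneg ha.le _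
  have hβ0 : 0 ≤ β := by rw [hβ_def]; exact Real.rpow_nonneg hb.le _
  have hL : ‖α • x - β • y‖ ^ 2 = A ^ 2 - 2 * (α * β) * c + B ^ 2 := by
    have h0 := norm_sub_sq_real (α • x) (β • y)
    rw [norm_smul, norm_smul, real_inner_smul_left, real_inner_smul_right,
      Real.norm_eq_abs, Real.norm_eq_abs, abs_of_nonneg hα0, abs_of_nonneg hβ0,
      ← ha_def, ← hb_def, ← hc_def] at h0
    rw [h0, ← hαa, ← hβb]; ring
  have hcs : |c| ≤ a * b := by rw [hc_def, ha_def, hb_def]; exact abs_real_inner_le_norm x y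
  have hc1 : -(a * b) ≤ c := neg_le_of_abs_le hcs
  have hc2 : c ≤ a * b := le_of_abs_le hcs
  have hab : 0 < a * b := mul_pos ha hb
  set lam := (a * b + c) / (2 * (a * b)) with hlam_def
  set mu := (a * b - c) / (2 * (a * b)) with hmu_def
  clear_value lam mu
  have hlam : 0 ≤ lam := by rw [hlam_def]; exact div_nonneg (by linarith) (by linarith)
  have hmu : 0 ≤ mu := by rw [hmu_def]; exact div_nonneg (by linarith) (by linarith)
  have hsum : lam + mu = 1 := by
    rw [hlam_def, hmu_def]; field_simp; ring
  set s₀ := (a - b) ^ 2 with hs₀_def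
  set s₁ := (a + b) ^ 2 with hs₁_def
  clear_value s₀ s₁
  have hs : lam * s₀ + mu * s₁ = a ^ 2 - 2 * c + b ^ 2 := by
    rw [hlam_def, hmu_def, hs₀_def, hs₁_def]; field_simp; ring
  -- concavity
  have conc : lam * s₀ ^ (p-1) + mu * s₁ ^ (p-1) ≤ (t ^ 2) ^ (p-1) := by
    have h := (Real.concaveOn_rpow hq0 hq1).2 (Set.mem_Ici.2 (sq_nonneg (a - b)))
      (Set.mem_Ici.2 (sq_nonneg (a + b))) hlam hmu hsum
    simp only [smul_eq_mul] at h
    rw [← hs₀_def, ← hs₁_def, hs, ← ht2] at h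
    exact h
  set E := |a - b| ^ (p-1) with hE_def
  set D := (a + b) ^ (p-1) with hD_def
  clear_value E D
  have hE0 : 0 ≤ E := by rw [hE_def]; exact Real.rpow_nonneg (abs_nonneg _) _
  have hD0 : 0 ≤ D := by rw [hD_def]; exact Real.rpow_nonneg (by linarith) _
  have hs₀q : s₀ ^ (p-1) = E ^ 2 := by
    rw [hs₀_def, hE_def, ← sq_abs (a - b)]; exact sq_rpow _ _ (abs_nonneg _)
  have hs₁q : s₁ ^ (p-1) = D ^ 2 := by
    rw [hs₁_def, hD_def]; exact sq_rpow _ _ (by linarith)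
  have htq : (t ^ 2) ^ (p-1) = (t ^ (p-1)) ^ 2 := sq_rpow _ _ ht0
  -- endpoint 1
  have e1 : |A - B| ≤ E := by
    rw [hA_def, hB_def, hE_def]
    rcases le_total b a with h | h
    · have h1 : b ^ (p-1) ≤ a ^ (p-1) := Real.rpow_le_rpow hb.le h hq0
      rw [abs_of_nonneg (by linarith), abs_of_nonneg (by linarith)]
      exact sub_rpow_le hb.le h hq0 hq1
    · have h1 : a ^ (p-1) ≤ b ^ (p-1) := Real.rpow_le_rpow ha.le h hq0
      rw [abs_of_nonpos (by linarith), abs_of_nonpos (show a - b ≤ 0 by linarith),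
        neg_sub, neg_sub]
      exact sub_rpow_le ha.le h hq0 hq1
  -- endpoint 2
  have e2 : A + B ≤ 2 ^ (2 - p) * D := by
    have h := (Real.concaveOn_rpow hq0 hq1).2 (Set.mem_Ici.2 ha.le) (Set.mem_Ici.2 hb.le)
      (by norm_num : (0:ℝ) ≤ 1/2) (by norm_num : (0:ℝ) ≤ 1/2) (by norm_num)
    simp only [smul_eq_mul] at h
    have hhalf : ((1:ℝ)/2 * a + 1/2 * b) ^ (p-1) = (2:ℝ) ^ (1 - p) * (a + b) ^ (p-1) := by
      rw [show (1:ℝ)/2 * a + 1/2 * b = (1/2) * (a + b) by ring,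
        Real.mul_rpow (by norm_num) (by linarith),
        show (1:ℝ)/2 = (2:ℝ) ^ ((-1 : ℝ)) by rw [Real.rpow_neg_one]; norm_num,
        ← Real.rpow_mul (by norm_num : (0:ℝ) ≤ 2)]
      norm_num
    rw [hhalf] at h
    have h2 : (2:ℝ) ^ (2 - p) = 2 * (2:ℝ) ^ (1 - p) := by
      rw [show (2:ℝ) - p = 1 + (1 - p) by ring, Real.rpow_add (by norm_num), Real.rpow_one]
    rw [hD_def, h2, hA_def, hB_def]
    linarith
  -- identity
  have hαβ : (α * β) * (a * b) = A * B := by rw [← hαa, ← hβb]; ring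
  have hid : A ^ 2 - 2 * (α * β) * c + B ^ 2 = lam * (A - B) ^ 2 + mu * (A + B) ^ 2 := by
    rw [hlam_def, hmu_def]
    field_simp
    linear_combination (-4 * c) * hαβ
  -- assemble squares
  set KP := (2:ℝ) ^ (2 - p) with hKP_def
  clear_value KP
  have e1' : (A - B) ^ 2 ≤ E ^ 2 := by
    rw [← sq_abs (A - B)]
    exact pow_le_pow_left₀ (abs_nonneg _) e1 2
  have e2' : (A + B) ^ 2 ≤ KP ^ 2 * D ^ 2 := by
    rw [← mul_pow]
    exact pow_le_pow_left₀ (by linarith) e2 2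
  have step1 : ‖α • x - β • y‖ ^ 2 ≤ lam * E ^ 2 + mu * (KP ^ 2 * D ^ 2) := by
    rw [hL, hid]
    exact add_le_add (mul_le_mul_of_nonneg_left e1' hlam) (mul_le_mul_of_nonneg_left e2' hmu)
  have step2 : lam * E ^ 2 + mu * (KP ^ 2 * D ^ 2) ≤ KP ^ 2 * (lam * E ^ 2 + mu * (D ^ 2)) := by
    have hKP2 : 1 ≤ KP ^ 2 := one_le_pow₀ hKP
    have h' : 0 ≤ lam * E ^ 2 * (KP ^ 2 - 1) :=
      mul_nonneg (mul_nonneg hlam (sq_nonneg E)) (by linarith)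
    linarith [h']
  have step3 : KP ^ 2 * (lam * E ^ 2 + mu * (D ^ 2)) ≤ KP ^ 2 * (t ^ (p-1)) ^ 2 := by
    have h' : lam * E ^ 2 + mu * (D ^ 2) ≤ (t ^ (p-1)) ^ 2 := by
      rw [← hs₀q, ← hs₁q, ← htq]; exact conc
    exact mul_le_mul_of_nonneg_left h' (sq_nonneg KP)
  have step4 : KP ^ 2 * (t ^ (p-1)) ^ 2 ≤ (KP * (3 - p) * t ^ (p-1)) ^ 2 := by
    have h3 : (1:ℝ) ≤ (3 - p) ^ 2 := one_le_pow₀ (by linarith)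
    have h4 := mul_le_mul_of_nonneg_left h3
      (mul_nonneg (sq_nonneg KP) (sq_nonneg (t ^ (p-1))))
    calc KP ^ 2 * (t ^ (p-1)) ^ 2 = KP ^ 2 * (t ^ (p-1)) ^ 2 * 1 := by ring
      _ ≤ KP ^ 2 * (t ^ (p-1)) ^ 2 * (3 - p) ^ 2 := by linarith [h4]
      _ = (KP * (3 - p) * t ^ (p-1)) ^ 2 := by ring
  have hsq : ‖α • x - β • y‖ ^ 2 ≤ (KP * (3 - p) * t ^ (p-1)) ^ 2 := by
    linarith
  have hR0 : 0 ≤ KP * (3 - p) * t ^ (p-1) := by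
    have h5 : (0:ℝ) ≤ KP := by linarith
    have h6 : (0:ℝ) ≤ t ^ (p-1) := Real.rpow_nonneg ht0 _
    have h7 : (0:ℝ) ≤ 3 - p := by linarith
    positivity
  have hfin : ‖α • x - β • y‖ ≤ KP * (3 - p) * t ^ (p-1) := by
    have h0 : 0 ≤ ‖α • x - β • y‖ := norm_nonneg _
    have h1 := Real.sqrt_le_sqrt hsq
    rwa [Real.sqrt_sq h0, Real.sqrt_sq hR0] at h1
  exact hfin
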